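/- As the side lengths of a spherical triangle shrink to zero, the spherical Heron formula degenerates to the Euclidean Heron formula: if a, b, c are fixed positive reals satisfying the strict triangle inequality and E(t) denotes the spherical excess of the spherical triangle with sides ta, tb, tc on the unit sphere, then lim_{t→0⁺} E(t)/t² = sqrt(s(s−a)(s−b)(s−c)) where s = (a+b+c)/2. -/

import Mathlib

open Filter Real Set Topology

private lemma tendsto_tan_div_self :
    Tendsto (fun u : ℝ => Real.tan u / u) (𝓝[≠] (0:ℝ)) (𝓝 1) := by
  have h : HasDerivAt Real.tan 1 0 := by
    simpa using Real.hasDerivAt_tan (x := 0) (by simp)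
  have h2 := hasDerivAt_iff_tendsto_slope.mp h
  refine h2.congr fun u => ?_
  simp [slope_def_field]

private lemma tendsto_arctan_div_self :
    Tendsto (fun u : ℝ => Real.arctan u / u) (𝓝[≠] (0:ℝ)) (𝓝 1) := by
  have h : HasDerivAt Real.arctan 1 0 := by
    simpa using Real.hasDerivAt_arctan 0
  have h2 := hasDerivAt_iff_tendsto_slope.mp h
  refine h2.congr fun u => ?_
  simp [slope_def_field]

private lemma tendsto_tan_scaled (x : ℝ) (hx : 0 < x) :
    Tendsto (fun t : ℝ => Real.tan (t * x / 2) / t) (𝓝[>] (0:ℝ)) (𝓝 (x / 2)) := by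
  have hmap : Tendsto (fun t : ℝ => t * x / 2) (𝓝[>] (0:ℝ)) (𝓝[≠] (0:ℝ)) := by
    rw [tendsto_nhdsWithin_iff]
    constructor
    · have h : Tendsto (fun t : ℝ => t * x / 2) (𝓝 0) (𝓝 (0 * x / 2)) :=
        ((continuous_id.mul continuous_const).div_const 2).tendsto 0
      simpa using h.mono_left nhdsWithin_le_nhds
    · filter_upwards [self_mem_nhdsWithin] with t ht
      have ht' : (0:ℝ) < t := ht
      have : 0 < t * x / 2 := by positivity
      exact this.ne'
  have h1 := tendsto_tan_div_self.comp hmap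
  have h2 := h1.mul_const (x / 2)
  rw [one_mul] at h2
  refine h2.congr' ?_
  filter_upwards [self_mem_nhdsWithin] with t ht
  have ht0 : (t:ℝ) ≠ 0 := (ne_of_gt ht)
  simp only [Function.comp]
  field_simp

theorem spherical_heron_degenerates (a b c : ℝ)
    (ha : 0 < a) (hb : 0 < b) (hc : 0 < c)
    (hab : a < b + c) (hbc : b < a + c) (hca : c < a + b)
    (s : ℝ) (hs : s = (a + b + c) / 2)
    (E : ℝ → ℝ)
    (hE : ∀ t, E t = 4 * Real.arctan (Real.sqrt
      (Real.tan (t * s / 2) * Real.tan (t * (s - a) / 2) *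
        Real.tan (t * (s - b) / 2) * Real.tan (t * (s - c) / 2)))) :
    Filter.Tendsto (fun t => E t / t ^ 2) (nhdsWithin 0 (Set.Ioi 0))
      (nhds (Real.sqrt (s * (s - a) * (s - b) * (s - c)))) := by
  have hs0 : 0 < s := by rw [hs]; linarith
  have hsa : 0 < s - a := by rw [hs]; linarith
  have hsb : 0 < s - b := by rw [hs]; linarith
  have hsc : 0 < s - c := by rw [hs]; linarith
  set H2 := s * (s - a) * (s - b) * (s - c) with hH2
  have hH2pos : 0 < H2 := by positivity
  set Q : ℝ → ℝ := fun t => Real.tan (t * s / 2) * Real.tan (t * (s - a) / 2) *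
    Real.tan (t * (s - b) / 2) * Real.tan (t * (s - c) / 2) with hQ
  have hQdiv : Tendsto (fun t => Q t / t ^ 4) (𝓝[>] (0:ℝ)) (𝓝 (H2 / 16)) := by
    have h := (((tendsto_tan_scaled s hs0).mul (tendsto_tan_scaled _ hsa)).mul
      (tendsto_tan_scaled _ hsb)).mul (tendsto_tan_scaled _ hsc)
    rw [show H2 / 16 = s/2 * ((s-a)/2) * ((s-b)/2) * ((s-c)/2) by rw [hH2]; ring]
    refine h.congr' ?_
    filter_upwards [self_mem_nhdsWithin] with t ht
    have ht0 : (t:ℝ) ≠ 0 := ne_of_gt ht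
    simp only [hQ]
    rw [div_mul_div_comm, div_mul_div_comm, div_mul_div_comm]
    congr 1
    ring
  have hQpos : ∀ᶠ t in 𝓝[>] (0:ℝ), 0 < Q t := by
    have hmem : Ioo (0:ℝ) (π / s) ∈ 𝓝[>] (0:ℝ) :=
      Ioo_mem_nhdsGT_of_mem ⟨le_rfl, by positivity⟩
    filter_upwards [hmem] with t ht
    obtain ⟨ht0, hts⟩ := ht
    have key : ∀ x : ℝ, 0 < x → x ≤ s → 0 < Real.tan (t * x / 2) := by
      intro x hx hxs
      apply Real.tan_pos_of_pos_of_lt_pi_div_two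
      · positivity
      · have h1 : t * s < π := (lt_div_iff₀ hs0).mp hts
        have h2 : t * x ≤ t * s := by nlinarith
        linarith
    exact mul_pos (mul_pos (mul_pos (key s hs0 le_rfl) (key _ hsa (by linarith)))
      (key _ hsb (by linarith))) (key _ hsc (by linarith))
  have hQ0 : Tendsto Q (𝓝[>] (0:ℝ)) (𝓝 0) := by
    have h4 : Tendsto (fun t : ℝ => t ^ 4) (𝓝[>] (0:ℝ)) (𝓝 0) := by
      have h : Tendsto (fun t : ℝ => t ^ 4) (𝓝 0) (𝓝 ((0:ℝ) ^ 4)) :=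
        (continuous_pow 4).tendsto 0
      simpa using h.mono_left nhdsWithin_le_nhds
    have h := hQdiv.mul h4
    rw [mul_zero] at h
    refine h.congr' ?_
    filter_upwards [self_mem_nhdsWithin] with t ht
    have ht0 : (t:ℝ) ≠ 0 := ne_of_gt ht
    field_simp
  have hsq : Tendsto (fun t => Real.sqrt (Q t)) (𝓝[>] (0:ℝ)) (𝓝[≠] (0:ℝ)) := by
    rw [tendsto_nhdsWithin_iff]
    refine ⟨?_, ?_⟩
    · have h := (Real.continuous_sqrt.tendsto 0).comp hQ0
      simpa [Function.comp_def] using h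
    · filter_upwards [hQpos] with t ht
      exact (Real.sqrt_pos.mpr ht).ne'
  have harct : Tendsto (fun t => Real.arctan (Real.sqrt (Q t)) / Real.sqrt (Q t))
      (𝓝[>] (0:ℝ)) (𝓝 1) := tendsto_arctan_div_self.comp hsq
  have hsqdiv : Tendsto (fun t => Real.sqrt (Q t) / t ^ 2) (𝓝[>] (0:ℝ))
      (𝓝 (Real.sqrt H2 / 4)) := by
    have h := (Real.continuous_sqrt.tendsto (H2/16)).comp hQdiv
    have heq : Real.sqrt (H2 / 16) = Real.sqrt H2 / 4 := by
      rw [show (16:ℝ) = 4 ^ 2 by norm_num, Real.sqrt_div hH2pos.le, Real.sqrt_sq (by norm_num)]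
    rw [heq] at h
    refine h.congr' ?_
    filter_upwards [self_mem_nhdsWithin, hQpos] with t ht hQt
    have ht0 : (0:ℝ) < t := ht
    simp only [Function.comp]
    rw [show t ^ 4 = (t ^ 2) ^ 2 by ring, Real.sqrt_div hQt.le, Real.sqrt_sq (by positivity)]
  have hmain := (harct.const_mul 4).mul hsqdiv
  rw [show (4:ℝ) * 1 * (Real.sqrt H2 / 4) = Real.sqrt H2 by ring] at hmain
  refine hmain.congr' ?_
  filter_upwards [hQpos] with t hQt
  have hsqQ : Real.sqrt (Q t) ≠ 0 := (Real.sqrt_pos.mpr hQt).ne'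
  rw [hE t]
  field_simp
  rfl
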